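/- Let k ≥ 2 and let q_1, …, q_k ∈ R^{k−1} be unit vectors with ⟨q_i, q_j⟩ = −1/(k−1) for all i ≠ j. If real numbers b_1, …, b_k satisfy Σ_{i=1}^k b_i = 0 and ‖Σ_{i=1}^k b_i q_i‖ ≤ C for some real C ≥ 0, then Σ_{i=1}^k |b_i| ≤ √(k−1) · C. -/

import Mathlib

open scoped RealInnerProductSpace

theorem simplex_balance_bound (k : ℕ) (hk : 2 ≤ k)
    (q : Fin k → EuclideanSpace ℝ (Fin (k - 1)))
    (hq : ∀ i, ‖q i‖ = 1)
    (hq' : ∀ i j, i ≠ j → ⟪q i, q j⟫ = -1 / ((k : ℝ) - 1))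
    (b : Fin k → ℝ) (hb : ∑ i, b i = 0)
    (C : ℝ) (hC : 0 ≤ C) (hbd : ‖∑ i, b i • q i‖ ≤ C) :
    ∑ i, |b i| ≤ Real.sqrt ((k : ℝ) - 1) * C := by
  have hk2 : (2:ℝ) ≤ (k:ℝ) := by exact_mod_cast hk
  have hkpos : (0:ℝ) < (k:ℝ) - 1 := by linarith
  set S := ∑ i, b i • q i with hS
  have hdiag : ∀ i, ⟪q i, q i⟫ = 1 := by
    intro i
    rw [real_inner_self_eq_norm_sq, hq i]; norm_num
  have hsum_erase : ∀ i : Fin k, ∑ j ∈ Finset.univ.erase i, b j = - b i := by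
    intro i
    have h := Finset.add_sum_erase Finset.univ b (Finset.mem_univ i)
    rw [hb] at h
    linarith
  have hinner : ∀ i, ⟪q i, S⟫ = ((k:ℝ)/((k:ℝ)-1)) * b i := by
    intro i
    rw [hS, inner_sum, ← Finset.add_sum_erase _ _ (Finset.mem_univ i),
      real_inner_smul_right, hdiag i]
    have h2 : ∑ j ∈ Finset.univ.erase i, ⟪q i, b j • q j⟫
        = ∑ j ∈ Finset.univ.erase i, b j * (-1/((k:ℝ)-1)) := by
      apply Finset.sum_congr rfl
      intro j hj
      rw [real_inner_smul_right, hq' i j (Ne.symm (Finset.ne_of_mem_erase hj))]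
    rw [h2, ← Finset.sum_mul, hsum_erase i]
    field_simp
    ring
  set e : Fin k → ℝ := fun i => if 0 ≤ b i then 1 else -1 with he
  have heb : ∀ i, e i * b i = |b i| := by
    intro i
    rcases le_or_gt 0 (b i) with h | h
    · simp [he, h, abs_of_nonneg h]
    · simp [he, not_le.mpr h, abs_of_neg h]
  have he2 : ∀ i, e i * e i = 1 := by
    intro i
    rcases le_or_gt 0 (b i) with h | h
    · simp [he, h]
    · simp [he, not_le.mpr h]
  set T := ∑ i, e i • q i with hT
  have hTS : ⟪T, S⟫ = ((k:ℝ)/((k:ℝ)-1)) * ∑ i, |b i| := by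
    rw [hT, sum_inner]
    rw [Finset.mul_sum]
    apply Finset.sum_congr rfl
    intro i _
    rw [real_inner_smul_left, hinner i, ← heb i]
    ring
  have hT2 : ⟪T, T⟫ ≤ (k:ℝ)^2/((k:ℝ)-1) := by
    rw [hT, sum_inner]
    have hrow : ∀ i : Fin k, ⟪e i • q i, T⟫
        = (∑ j, e i * e j * (-1/((k:ℝ)-1))) + (1 + 1/((k:ℝ)-1)) := by
      intro i
      rw [hT, real_inner_smul_left, inner_sum]
      have h3 : ∀ j, e i * ⟪q i, e j • q j⟫ = e i * e j * ⟪q i, q j⟫ := by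
        intro j; rw [real_inner_smul_right]; ring
      rw [Finset.mul_sum]
      simp_rw [h3]
      have h4 : (∑ j, e i * e j * ⟪q i, q j⟫)
          - ∑ j, e i * e j * (-1/((k:ℝ)-1)) = 1 + 1/((k:ℝ)-1) := by
        rw [← Finset.sum_sub_distrib]
        rw [Finset.sum_eq_single i]
        · rw [hdiag i, he2 i]
          field_simp
          ring
        · intro j _ hj
          rw [hq' i j (Ne.symm hj)]
          ring
        · intro h; exact absurd (Finset.mem_univ i) h
      linarith
    simp_rw [← hT, hrow]
    rw [Finset.sum_add_distrib]
    have h5 : ∑ i : Fin k, (∑ j, e i * e j * (-1/((k:ℝ)-1)))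
        = (-1/((k:ℝ)-1)) * (∑ i, e i)^2 := by
      simp_rw [← Finset.sum_mul, ← Finset.mul_sum]
      rw [← Finset.sum_mul]
      ring
    rw [h5]
    have h6 : ∑ _i : Fin k, (1 + 1/((k:ℝ)-1)) = (k:ℝ) * (1 + 1/((k:ℝ)-1)) := by
      rw [Finset.sum_const, Finset.card_univ, Fintype.card_fin]
      ring
    rw [h6]
    have h7 : (0:ℝ) ≤ (∑ i, e i)^2 := sq_nonneg _
    have h8 : (-1/((k:ℝ)-1)) * (∑ i, e i)^2 ≤ 0 := by
      apply mul_nonpos_of_nonpos_of_nonneg _ h7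
      apply div_nonpos_of_nonpos_of_nonneg <;> linarith
    have h9 : (k:ℝ) * (1 + 1/((k:ℝ)-1)) = (k:ℝ)^2/((k:ℝ)-1) := by
      field_simp
      ring
    linarith
  -- Norm bound on T
  set M : ℝ := (k:ℝ) / Real.sqrt ((k:ℝ)-1) with hM
  have hsq : Real.sqrt ((k:ℝ)-1) ^ 2 = (k:ℝ)-1 := Real.sq_sqrt hkpos.le
  have hsqpos : 0 < Real.sqrt ((k:ℝ)-1) := Real.sqrt_pos.mpr hkpos
  have hMpos : 0 < M := by positivity
  have hTnorm : ‖T‖ ≤ M := by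
    have h10 : ‖T‖^2 ≤ M^2 := by
      rw [← real_inner_self_eq_norm_sq]
      have hMe : M^2 = (k:ℝ)^2/((k:ℝ)-1) := by
        rw [hM, div_pow, hsq]
      linarith [hT2]
    have h11 := Real.sqrt_le_sqrt h10
    rwa [Real.sqrt_sq (norm_nonneg T), Real.sqrt_sq hMpos.le] at h11
  have hcs : ⟪T, S⟫ ≤ ‖T‖ * ‖S‖ := real_inner_le_norm T S
  have hfinal : ((k:ℝ)/((k:ℝ)-1)) * ∑ i, |b i| ≤ M * C := by
    rw [← hTS]
    calc ⟪T, S⟫ ≤ ‖T‖ * ‖S‖ := hcs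
      _ ≤ M * C := by
          apply mul_le_mul hTnorm hbd (norm_nonneg S) hMpos.le
  have hkR : (0:ℝ) < (k:ℝ) := by linarith
  have hMval : ((k:ℝ)-1)/(k:ℝ) * M = Real.sqrt ((k:ℝ)-1) := by
    rw [hM]
    field_simp
    rw [hsq]
  have hfrac : (0:ℝ) ≤ ((k:ℝ)-1)/(k:ℝ) := by positivity
  have h12 : ((k:ℝ)-1)/(k:ℝ) * (((k:ℝ)/((k:ℝ)-1)) * ∑ i, |b i|) = ∑ i, |b i| := by
    field_simp
  calc ∑ i, |b i| = ((k:ℝ)-1)/(k:ℝ) * (((k:ℝ)/((k:ℝ)-1)) * ∑ i, |b i|) := h12.symm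
    _ ≤ ((k:ℝ)-1)/(k:ℝ) * (M * C) := mul_le_mul_of_nonneg_left hfinal hfrac
    _ = (((k:ℝ)-1)/(k:ℝ) * M) * C := by ring
    _ = Real.sqrt ((k:ℝ)-1) * C := by rw [hMval]
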